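/- arXiv:0908.2940 — 3 statements merged into one kernel-verified Lean document; each statement's English description precedes it below -/
import Mathlib

section
/- Let δ with 0 < δ ≤ 1 be a constant with the following (Razborov-type) property: for every positive integer n', every integer m' with n'/4 − δn' ≤ m' ≤ n'/4, and every rectangle R' = A' × B' over m'-element subsets of {1,…,n'} with μ_{0,n',m'}(R') ≥ 2^{−δn'}, one has μ_{1,n',m'}(R') ≥ (2/3)·μ_{0,n',m'}(R'). Set γ = δ/3. Then for every positive integer n divisible by 4, with m = n/4, every integer k with 0 ≤ k ≤ γ·n/2, and every rectangle R = A × B over m-element subsets of {1,…,n} with μ_{0,n,m}(R) ≥ 2^{−γn}, one has μ_{k,n,m}(R) ≥ μ_{0,n,m}(R)/2^{k} − k·2^{−δ(n−k+1)}. -/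
/-- `T n m k` : the set of pairs `(x, y)` of subsets of `{1,…,n}` (modeled as `Fin n`)
with `|x| = |y| = m` and `|x ∩ y| = k`. -/
def T (n m k : ℕ) : Finset (Finset (Fin n) × Finset (Fin n)) :=
  Finset.univ.filter (fun p => p.1.card = m ∧ p.2.card = m ∧ (p.1 ∩ p.2).card = k)

/-- `mu n m k R = |R ∩ T_{k,n,m}| / |T_{k,n,m}|`. -/
noncomputable def mu (n m k : ℕ) (R : Finset (Finset (Fin n) × Finset (Fin n))) : ℝ :=
  ((R ∩ T n m k).card : ℝ) / ((T n m k).card : ℝ)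

/-- delete `i` from `x` and reindex into `Fin n`. -/
noncomputable def delF {n : ℕ} (i : Fin (n+1)) (x : Finset (Fin (n+1))) : Finset (Fin n) :=
  x.preimage i.succAbove (Fin.succAbove_right_injective.injOn)

lemma mem_delF {n : ℕ} {i : Fin (n+1)} {x : Finset (Fin (n+1))} {j : Fin n} :
    j ∈ delF i x ↔ i.succAbove j ∈ x := Finset.mem_preimage

def insF {n : ℕ} (i : Fin (n+1)) (x : Finset (Fin n)) : Finset (Fin (n+1)) :=
  insert i (x.map (Fin.succAboveEmb i))

lemma mem_insF {n : ℕ} {i : Fin (n+1)} {x : Finset (Fin n)} {j : Fin (n+1)} :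
    j ∈ insF i x ↔ j = i ∨ ∃ t ∈ x, i.succAbove t = j := by
  simp [insF, Fin.succAboveEmb]

lemma mem_insF_self {n : ℕ} (i : Fin (n+1)) (x : Finset (Fin n)) : i ∈ insF i x :=
  Finset.mem_insert_self _ _

lemma delF_insF {n : ℕ} (i : Fin (n+1)) (x : Finset (Fin n)) : delF i (insF i x) = x := by
  ext j
  simp only [mem_delF, mem_insF]
  constructor
  · rintro (h | ⟨t, ht, h⟩)
    · exact absurd h (Fin.succAbove_ne i j)
    · rwa [Fin.succAbove_right_injective h] at ht
  · exact fun h => Or.inr ⟨j, h, rfl⟩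

lemma insF_delF {n : ℕ} {i : Fin (n+1)} {x : Finset (Fin (n+1))} (hi : i ∈ x) :
    insF i (delF i x) = x := by
  ext j
  simp only [mem_insF, mem_delF]
  constructor
  · rintro (h | ⟨t, ht, h⟩)
    · exact h ▸ hi
    · exact h ▸ ht
  · intro hj
    rcases eq_or_ne j i with h | h
    · exact Or.inl h
    · obtain ⟨t, ht⟩ := Fin.exists_succAbove_eq h
      exact Or.inr ⟨t, ht ▸ hj, ht⟩

lemma card_insF {n : ℕ} (i : Fin (n+1)) (x : Finset (Fin n)) :
    (insF i x).card = x.card + 1 := by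
  rw [insF, Finset.card_insert_of_notMem, Finset.card_map]
  simp only [Finset.mem_map, Fin.succAboveEmb]
  rintro ⟨t, -, h⟩
  exact Fin.succAbove_ne i t h

lemma card_delF {n : ℕ} {i : Fin (n+1)} {x : Finset (Fin (n+1))} (hi : i ∈ x) :
    (delF i x).card + 1 = x.card := by
  rw [← card_insF i (delF i x), insF_delF hi]

lemma delF_inter {n : ℕ} (i : Fin (n+1)) (x y : Finset (Fin (n+1))) :
    delF i (x ∩ y) = delF i x ∩ delF i y := by
  ext j; simp [mem_delF]

noncomputable def projF {n : ℕ} (i : Fin (n+1)) (A : Finset (Finset (Fin (n+1)))) :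
    Finset (Finset (Fin n)) :=
  (A.filter (fun x => i ∈ x)).image (delF i)

lemma mem_projF {n : ℕ} {i : Fin (n+1)} {A : Finset (Finset (Fin (n+1)))} {x' : Finset (Fin n)} :
    x' ∈ projF i A ↔ ∃ x ∈ A, i ∈ x ∧ delF i x = x' := by
  simp [projF, and_assoc]

lemma card_projF {n m : ℕ} {i : Fin (n+1)} {A : Finset (Finset (Fin (n+1)))}
    (hA : ∀ x ∈ A, x.card = m+1) : ∀ x' ∈ projF i A, x'.card = m := by
  intro x' hx'
  obtain ⟨x, hx, hix, rfl⟩ := mem_projF.mp hx'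
  have := card_delF hix
  rw [hA x hx] at this
  omega

lemma mem_RT {n m k : ℕ} {A B : Finset (Finset (Fin n))} {p : Finset (Fin n) × Finset (Fin n)} :
    p ∈ (A ×ˢ B) ∩ T n m k ↔
      p.1 ∈ A ∧ p.2 ∈ B ∧ p.1.card = m ∧ p.2.card = m ∧ (p.1 ∩ p.2).card = k := by
  simp [T, Finset.mem_inter, Finset.mem_product, Finset.mem_filter, and_assoc]

lemma card_slice {n m k : ℕ} (i : Fin (n+1)) (A B : Finset (Finset (Fin (n+1))))
    (hA : ∀ x ∈ A, x.card = m+1) (hB : ∀ y ∈ B, y.card = m+1) :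
    (((A ×ˢ B) ∩ T (n+1) (m+1) (k+1)).filter (fun p => i ∈ p.1 ∧ i ∈ p.2)).card
      = ((projF i A ×ˢ projF i B) ∩ T n m k).card := by
  apply Finset.card_bij (fun p _ => (delF i p.1, delF i p.2))
  · rintro ⟨x, y⟩ hp
    rw [Finset.mem_filter, mem_RT] at hp
    obtain ⟨⟨hxA, hyB, hxc, hyc, hic⟩, hix, hiy⟩ := hp
    rw [mem_RT]
    dsimp only
    dsimp only at hix hiy hxc hyc hic
    have h1 := card_delF hix
    have h2 := card_delF hiy
    have h3 : i ∈ x ∩ y := Finset.mem_inter.mpr ⟨hix, hiy⟩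
    have h4 := card_delF h3
    rw [delF_inter] at h4
    exact ⟨mem_projF.mpr ⟨x, hxA, hix, rfl⟩, mem_projF.mpr ⟨y, hyB, hiy, rfl⟩,
      by omega, by omega, by omega⟩
  · rintro ⟨x, y⟩ hp ⟨x2, y2⟩ hq h
    rw [Finset.mem_filter] at hp hq
    have h1 : delF i x = delF i x2 := congrArg Prod.fst h
    have h2 : delF i y = delF i y2 := congrArg Prod.snd h
    have := congrArg (insF i) h1
    rw [insF_delF hp.2.1, insF_delF hq.2.1] at this
    have := congrArg (insF i) h2
    rw [insF_delF hp.2.2, insF_delF hq.2.2] at this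
    ext1
    · exact by have := congrArg (insF i) h1; rwa [insF_delF hp.2.1, insF_delF hq.2.1] at this
    · exact by have := congrArg (insF i) h2; rwa [insF_delF hp.2.2, insF_delF hq.2.2] at this
  · rintro ⟨x', y'⟩ hp
    rw [mem_RT] at hp
    dsimp only at hp
    obtain ⟨hx', hy', hxc, hyc, hic⟩ := hp
    obtain ⟨x, hxA, hix, rfl⟩ := mem_projF.mp hx'
    obtain ⟨y, hyB, hiy, rfl⟩ := mem_projF.mp hy'
    refine ⟨(x, y), ?_, rfl⟩
    rw [Finset.mem_filter, mem_RT]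
    dsimp only
    have h3 : i ∈ x ∩ y := Finset.mem_inter.mpr ⟨hix, hiy⟩
    have h4 := card_delF h3
    rw [delF_inter] at h4
    exact ⟨⟨hxA, hyB, hA x hxA, hB y hyB, by omega⟩, hix, hiy⟩

lemma double_count {n m k : ℕ} (A B : Finset (Finset (Fin (n+1))))
    (hA : ∀ x ∈ A, x.card = m+1) (hB : ∀ y ∈ B, y.card = m+1) :
    (k+1) * ((A ×ˢ B) ∩ T (n+1) (m+1) (k+1)).card
      = ∑ i : Fin (n+1), ((projF i A ×ˢ projF i B) ∩ T n m k).card := by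
  have h1 : ∀ i : Fin (n+1),
      ((projF i A ×ˢ projF i B) ∩ T n m k).card
        = ∑ p ∈ (A ×ˢ B) ∩ T (n+1) (m+1) (k+1), if i ∈ p.1 ∧ i ∈ p.2 then 1 else 0 := by
    intro i
    rw [← card_slice i A B hA hB, Finset.card_filter]
  rw [Finset.sum_congr rfl (fun i _ => h1 i), Finset.sum_comm]
  have h2 : ∀ p ∈ (A ×ˢ B) ∩ T (n+1) (m+1) (k+1),
      (∑ i : Fin (n+1), if i ∈ p.1 ∧ i ∈ p.2 then 1 else 0) = k+1 := by
    intro p hp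
    have : (∑ i : Fin (n+1), if i ∈ p.1 ∧ i ∈ p.2 then 1 else 0)
        = (Finset.univ.filter (fun i => i ∈ p.1 ∩ p.2)).card := by
      rw [Finset.card_filter]
      exact Finset.sum_congr rfl (fun i _ => by simp [Finset.mem_inter])
    rw [this, Finset.filter_univ_mem]
    exact (mem_RT.mp hp).2.2.2.2
  rw [Finset.sum_congr rfl h2, Finset.sum_const, smul_eq_mul]
  ring

lemma projF_univ {n m : ℕ} (i : Fin (n+1)) :
    projF i (Finset.univ.filter (fun x : Finset (Fin (n+1)) => x.card = m+1))
      = Finset.univ.filter (fun x : Finset (Fin n) => x.card = m) := by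
  ext x'
  simp only [Finset.mem_filter, Finset.mem_univ, true_and]
  constructor
  · intro hx'
    exact card_projF (fun x hx => (Finset.mem_filter.mp hx).2) x' hx'
  · intro hc
    refine mem_projF.mpr ⟨insF i x', ?_, mem_insF_self i x', delF_insF i x'⟩
    simp [card_insF, hc]

lemma RT_univ {n m k : ℕ} :
    ((Finset.univ.filter (fun x : Finset (Fin n) => x.card = m)) ×ˢ
      (Finset.univ.filter (fun x : Finset (Fin n) => x.card = m))) ∩ T n m k = T n m k := by
  apply Finset.inter_eq_right.mpr
  intro p hp
  rw [T, Finset.mem_filter] at hp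
  rw [Finset.mem_product]
  simp only [Finset.mem_filter, Finset.mem_univ, true_and]
  exact ⟨hp.2.1, hp.2.2.1⟩

lemma T_identity {n m k : ℕ} :
    (k+1) * (T (n+1) (m+1) (k+1)).card = (n+1) * (T n m k).card := by
  have := double_count (m := m) (k := k)
    (Finset.univ.filter (fun x : Finset (Fin (n+1)) => x.card = m+1))
    (Finset.univ.filter (fun x : Finset (Fin (n+1)) => x.card = m+1))
    (fun x hx => (Finset.mem_filter.mp hx).2) (fun x hx => (Finset.mem_filter.mp hx).2)
  rw [RT_univ] at this
  rw [this]
  rw [Finset.sum_congr rfl (fun i _ => by rw [projF_univ i, RT_univ])]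
  simp [mul_comm]

lemma attachFin_inter {n : ℕ} (s t : Finset ℕ) (hs : ∀ m ∈ s, m < n) (ht : ∀ m ∈ t, m < n) :
    s.attachFin hs ∩ t.attachFin ht
      = (s ∩ t).attachFin (fun m hm => hs m (Finset.mem_inter.mp hm).1) := by
  ext j
  simp [Finset.mem_inter, Finset.mem_attachFin]

lemma T_nonempty {n m k : ℕ} (hk : k ≤ m) (h2 : 2*m ≤ n) : (T n m k).Nonempty := by
  have hs : ∀ j ∈ Finset.range m, j < n := fun j hj => by
    have := Finset.mem_range.mp hj; omega
  have ht : ∀ j ∈ Finset.Ico (m-k) (2*m-k), j < n := fun j hj => by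
    have := (Finset.mem_Ico.mp hj).2; omega
  refine ⟨((Finset.range m).attachFin hs, (Finset.Ico (m-k) (2*m-k)).attachFin ht), ?_⟩
  rw [T, Finset.mem_filter]
  refine ⟨Finset.mem_univ _, ?_, ?_, ?_⟩
  · simp
  · simp only [Finset.card_attachFin, Nat.card_Ico]; omega
  · rw [attachFin_inter, Finset.card_attachFin, Finset.range_eq_Ico, Finset.Ico_inter_Ico,
      Nat.card_Ico]
    omega

lemma mu_nonneg (n m k : ℕ) (R : Finset (Finset (Fin n) × Finset (Fin n))) :
    0 ≤ mu n m k R := by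
  rw [mu]; positivity

lemma mu_avg {n m k : ℕ} (A B : Finset (Finset (Fin (n+1))))
    (hA : ∀ x ∈ A, x.card = m+1) (hB : ∀ y ∈ B, y.card = m+1) (hT : (T n m k).Nonempty) :
    mu (n+1) (m+1) (k+1) (A ×ˢ B)
      = (∑ i : Fin (n+1), mu n m k (projF i A ×ˢ projF i B)) / (n+1) := by
  have ht : 0 < (T n m k).card := Finset.card_pos.mpr hT
  have htb : 0 < (T (n+1) (m+1) (k+1)).card := by
    rcases Nat.eq_zero_or_pos (T (n+1) (m+1) (k+1)).card with h | h
    · exfalso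
      have := T_identity (n := n) (m := m) (k := k)
      rw [h, Nat.mul_zero] at this
      rcases Nat.mul_eq_zero.mp this.symm with h' | h' <;> omega
    · exact h
  have key := congrArg (fun z : ℕ => (z : ℝ)) (double_count A B hA hB (k := k))
  have hid := congrArg (fun z : ℕ => (z : ℝ)) (T_identity (n := n) (m := m) (k := k))
  push_cast at key hid
  rw [mu, Finset.sum_congr rfl (fun i _ => by rw [mu]), ← Finset.sum_div, ← key]
  have h1 : ((T n m k).card : ℝ) ≠ 0 := Nat.cast_ne_zero.mpr ht.ne'
  have h2 : ((T (n+1) (m+1) (k+1)).card : ℝ) ≠ 0 := Nat.cast_ne_zero.mpr htb.ne'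
  have h3 : ((n:ℝ)+1) ≠ 0 := by positivity
  rw [div_div, div_eq_div_iff h2 (mul_ne_zero h1 h3)]
  linear_combination (-(((A ×ˢ B) ∩ T (n+1) (m+1) (k+1)).card : ℝ)) * hid

lemma mu1_step (δ : ℝ) (hδ0 : 0 < δ)
    (hRaz : ∀ (n' m' : ℕ), 0 < n' →
      (n' : ℝ) / 4 - δ * n' ≤ (m' : ℝ) → (m' : ℝ) ≤ (n' : ℝ) / 4 →
      ∀ A' B' : Finset (Finset (Fin n')),
        (∀ x ∈ A', x.card = m') → (∀ y ∈ B', y.card = m') →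
        mu n' m' 0 (A' ×ˢ B') ≥ (2 : ℝ) ^ (-(δ * n')) →
        mu n' m' 1 (A' ×ˢ B') ≥ (2 / 3) * mu n' m' 0 (A' ×ˢ B'))
    (n m : ℕ) (hn : 0 < n) (hlo : (n : ℝ) / 4 - δ * n ≤ (m : ℝ)) (hhi : (m : ℝ) ≤ (n : ℝ) / 4)
    (A B : Finset (Finset (Fin n))) (hA : ∀ x ∈ A, x.card = m) (hB : ∀ y ∈ B, y.card = m) :
    mu n m 1 (A ×ˢ B) ≥ mu n m 0 (A ×ˢ B) / 2 - (2 : ℝ) ^ (-(δ * n)) := by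
  have hpow : (0:ℝ) < (2 : ℝ) ^ (-(δ * n)) := Real.rpow_pos_of_pos (by norm_num) _
  by_cases h : mu n m 0 (A ×ˢ B) ≥ (2 : ℝ) ^ (-(δ * n))
  · have := hRaz n m hn hlo hhi A B hA hB h
    have h0 := mu_nonneg n m 0 (A ×ˢ B)
    linarith
  · have h1 := mu_nonneg n m 1 (A ×ˢ B)
    push_neg at h
    linarith

lemma Qlem (δ : ℝ) (hδ0 : 0 < δ) (hδ1 : δ ≤ 1)
    (hRaz : ∀ (n' m' : ℕ), 0 < n' →
      (n' : ℝ) / 4 - δ * n' ≤ (m' : ℝ) → (m' : ℝ) ≤ (n' : ℝ) / 4 →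
      ∀ A' B' : Finset (Finset (Fin n')),
        (∀ x ∈ A', x.card = m') → (∀ y ∈ B', y.card = m') →
        mu n' m' 0 (A' ×ˢ B') ≥ (2 : ℝ) ^ (-(δ * n')) →
        mu n' m' 1 (A' ×ˢ B') ≥ (2 / 3) * mu n' m' 0 (A' ×ˢ B')) :
    ∀ (k n m : ℕ) (A B : Finset (Finset (Fin n))),
      (∀ x ∈ A, x.card = m) → (∀ y ∈ B, y.card = m) →
      k ≤ m → (m : ℝ) ≤ (n : ℝ) / 4 → (n : ℝ) / 4 - δ * n + (7/4) * k ≤ (m : ℝ) →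
      mu n m k (A ×ˢ B) ≥
        mu n m 0 (A ×ˢ B) / 2 ^ k - k * (2 : ℝ) ^ (-(δ * ((n : ℝ) - k + 1))) := by
  intro k
  induction k with
  | zero => intro n m A B _ _ _ _ _; simp
  | succ k ih =>
    intro n m A B hA hB hkm hm4 hlow
    have hk0 : (0:ℝ) ≤ (k:ℝ) := Nat.cast_nonneg k
    have hm1 : 1 ≤ m := by omega
    have h4m : 4 * m ≤ n := by
      have : (4:ℝ) * m ≤ (n:ℝ) := by linarith
      exact_mod_cast this
    have hn4 : 4 ≤ n := by omega
    obtain ⟨n', rfl⟩ : ∃ n', n = n'+1 := ⟨n-1, by omega⟩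
    obtain ⟨m', rfl⟩ : ∃ m', m = m'+1 := ⟨m-1, by omega⟩
    have hcast : ((n'+1 : ℕ) : ℝ) = (n' : ℝ) + 1 := by push_cast; ring
    have hcastm : ((m'+1 : ℕ) : ℝ) = (m' : ℝ) + 1 := by push_cast; ring
    have h2m : 2 * m' ≤ n' := by omega
    have hT : (T n' m' k).Nonempty := T_nonempty (by omega) h2m
    have hT0 : (T n' m' 0).Nonempty := T_nonempty (Nat.zero_le _) h2m
    have havg := mu_avg A B hA hB hT
    have havg0 := mu_avg (k := 0) A B hA hB hT0
    -- the inductive bound for each i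
    set E : ℝ := (2 : ℝ) ^ (-(δ * ((n' : ℝ) - k + 1))) with hE
    have hpt : ∀ i : Fin (n'+1), mu n' m' k (projF i A ×ˢ projF i B) ≥
        mu n' m' 0 (projF i A ×ˢ projF i B) / 2 ^ k - k * E := by
      intro i
      apply ih n' m' (projF i A) (projF i B) (card_projF hA) (card_projF hB) (by omega)
      · rw [hcast, hcastm] at hm4; push_cast; linarith
      · rw [hcast, hcastm] at hlow; push_cast at hlow ⊢; linarith
    -- sum the inductive bounds
    have hsum : ∑ i : Fin (n'+1), mu n' m' k (projF i A ×ˢ projF i B) ≥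
        (∑ i : Fin (n'+1), mu n' m' 0 (projF i A ×ˢ projF i B)) / 2 ^ k
          - ((n':ℝ)+1) * (k * E) := by
      have := Finset.sum_le_sum (fun i (_ : i ∈ Finset.univ) => hpt i)
      rw [Finset.sum_sub_distrib, ← Finset.sum_div, Finset.sum_const, Finset.card_univ,
        Fintype.card_fin, nsmul_eq_mul, hcast] at this
      linarith
    norm_num at havg0
    have hN : (0:ℝ) < (n':ℝ)+1 := by positivity
    set S0 : ℝ := ∑ i : Fin (n'+1), mu n' m' 0 (projF i A ×ˢ projF i B) with hS0def
    have hS0 : S0 = ((n':ℝ)+1) * mu (n'+1) (m'+1) 1 (A ×ˢ B) := by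
      rw [havg0]; field_simp
    -- the Razborov step
    have hmu1 : mu (n'+1) (m'+1) 1 (A ×ˢ B) ≥
        mu (n'+1) (m'+1) 0 (A ×ˢ B) / 2 - (2 : ℝ) ^ (-(δ * ((n'+1 : ℕ) : ℝ))) := by
      apply mu1_step δ hδ0 hRaz _ _ (by omega) _ _ A B hA hB
      · rw [hcast, hcastm] at hlow ⊢; linarith
      · exact hm4
    set D : ℝ := (2 : ℝ) ^ (-(δ * ((n'+1 : ℕ) : ℝ))) with hD
    have hpos : (0:ℝ) < (2:ℝ) ^ k := by positivity
    have h2k : (1:ℝ) ≤ (2:ℝ) ^ k := one_le_pow₀ (by norm_num)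
    have hDpos : 0 < D := Real.rpow_pos_of_pos (by norm_num) _
    have hDE : D ≤ E := by
      apply Real.rpow_le_rpow_of_exponent_le (by norm_num)
      rw [hcast]
      nlinarith
    have hDk : D / 2 ^ k ≤ E := le_trans (div_le_self hDpos.le h2k) hDE
    have step1 : mu (n'+1) (m'+1) 1 (A ×ˢ B) / 2 ^ k - k * E ≤
        mu (n'+1) (m'+1) (k+1) (A ×ˢ B) := by
      rw [havg, le_div_iff₀ hN]
      calc (mu (n'+1) (m'+1) 1 (A ×ˢ B) / 2 ^ k - k * E) * ((n':ℝ)+1)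
          = ((n':ℝ)+1) * mu (n'+1) (m'+1) 1 (A ×ˢ B) / 2 ^ k - ((n':ℝ)+1) * (k * E) := by
            ring
        _ = S0 / 2^k - ((n':ℝ)+1)*(k*E) := by rw [hS0]
        _ ≤ ∑ i : Fin (n'+1), mu n' m' k (projF i A ×ˢ projF i B) := hsum
    have step2 : mu (n'+1) (m'+1) 1 (A ×ˢ B) / 2 ^ k ≥
        mu (n'+1) (m'+1) 0 (A ×ˢ B) / 2 ^ (k+1) - E := by
      have h' : (mu (n'+1) (m'+1) 0 (A ×ˢ B) / 2 - D) / 2^k ≤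
          mu (n'+1) (m'+1) 1 (A ×ˢ B) / 2^k := by gcongr
      have heq : (mu (n'+1) (m'+1) 0 (A ×ˢ B) / 2 - D) / 2^k
          = mu (n'+1) (m'+1) 0 (A ×ˢ B) / 2^(k+1) - D/2^k := by rw [pow_succ]; ring
      linarith
    have hEeq : (2:ℝ) ^ (-(δ * (((n'+1:ℕ):ℝ) - ((k+1:ℕ):ℝ) + 1))) = E := by
      rw [hE]; congr 1; push_cast; ring
    rw [ge_iff_le, hEeq]
    push_cast
    linarith

/-- Inductive form of the Intersection Sampling Lemma, assuming a Razborov-type lemma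
with constant `δ`, and taking `γ = δ/3`. -/
theorem intersection_sampling_inductive (δ : ℝ) (hδ0 : 0 < δ) (hδ1 : δ ≤ 1)
    (hRaz : ∀ (n' m' : ℕ), 0 < n' →
      (n' : ℝ) / 4 - δ * n' ≤ (m' : ℝ) → (m' : ℝ) ≤ (n' : ℝ) / 4 →
      ∀ A' B' : Finset (Finset (Fin n')),
        (∀ x ∈ A', x.card = m') → (∀ y ∈ B', y.card = m') →
        mu n' m' 0 (A' ×ˢ B') ≥ (2 : ℝ) ^ (-(δ * n')) →
        mu n' m' 1 (A' ×ˢ B') ≥ (2 / 3) * mu n' m' 0 (A' ×ˢ B')) :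
    ∀ (n k : ℕ), 0 < n → 4 ∣ n → (k : ℝ) ≤ (δ / 3) * n / 2 →
      ∀ A B : Finset (Finset (Fin n)),
        (∀ x ∈ A, x.card = n / 4) → (∀ y ∈ B, y.card = n / 4) →
        mu n (n / 4) 0 (A ×ˢ B) ≥ (2 : ℝ) ^ (-((δ / 3) * n)) →
        mu n (n / 4) k (A ×ˢ B) ≥
          mu n (n / 4) 0 (A ×ˢ B) / 2 ^ k - k * (2 : ℝ) ^ (-(δ * ((n : ℝ) - k + 1))) := by
  intro n k hn hdvd hk A B hA hB _
  have hm : ((n / 4 : ℕ) : ℝ) = (n : ℝ) / 4 := by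
    have h := Nat.div_mul_cancel hdvd
    have : (((n/4) * 4 : ℕ) : ℝ) = (n : ℝ) := by rw [h]
    push_cast at this
    linarith
  have hn0 : (0:ℝ) ≤ (n:ℝ) := Nat.cast_nonneg n
  have hkR : (k:ℝ) ≤ ((n/4 : ℕ) : ℝ) := by
    rw [hm]
    calc (k:ℝ) ≤ (δ/3) * n / 2 := hk
      _ ≤ (n:ℝ)/4 := by nlinarith
  apply Qlem δ hδ0 hδ1 hRaz k n (n/4) A B hA hB (Nat.cast_le.mp hkR) (le_of_eq hm)
  rw [hm]
  have hδn : (k:ℝ) ≤ δ * n / 6 := by linarith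
  nlinarith
end

section
/- Let δ with 0 < δ ≤ 1 be a constant with the following (Razborov-type) property: for every positive integer n', every integer m' with n'/4 − δn' ≤ m' ≤ n'/4, and every rectangle R' = A' × B' over m'-element subsets of {1,…,n'} with μ_{0,n',m'}(R') ≥ 2^{−δn'}, one has μ_{1,n',m'}(R') ≥ (2/3)·μ_{0,n',m'}(R'). Then there exist β > 0 and n₀ such that for every n ≥ n₀ divisible by 4 and every rectangle R = A × B over (n/4)-element subsets of {1,…,n} that has a witness element i ∈ {1,…,n} with i ∈ x ∩ y for all (x,y) ∈ R: either μ_{1,n,n/4}(R) ≤ 2^{−βn}, or μ_{2,n,n/4}(R) ≥ (4/3)·μ_{1,n,n/4}(R). -/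
open Finset

namespace Aux

variable {N : ℕ}

/-- insert `i` into a subset of `Fin N` viewed inside `Fin (N+1)` via `succAbove`. -/
def gmap (i : Fin (N+1)) (s : Finset (Fin N)) : Finset (Fin (N+1)) :=
  insert i (s.map i.succAboveEmb)

lemma not_mem_map (i : Fin (N+1)) (s : Finset (Fin N)) : i ∉ s.map i.succAboveEmb := by
  simp only [Finset.mem_map, Fin.succAboveEmb, Function.Embedding.coeFn_mk]
  rintro ⟨j, -, hj⟩
  exact Fin.succAbove_ne i j hj

lemma gmap_card (i : Fin (N+1)) (s : Finset (Fin N)) : (gmap i s).card = s.card + 1 := by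
  rw [gmap, Finset.card_insert_of_notMem (not_mem_map i s), Finset.card_map]

lemma gmap_inter (i : Fin (N+1)) (s t : Finset (Fin N)) :
    gmap i s ∩ gmap i t = gmap i (s ∩ t) := by
  ext a
  simp only [gmap, Finset.mem_inter, Finset.mem_insert, Finset.mem_map,
    Fin.succAboveEmb, Function.Embedding.coeFn_mk]
  constructor
  · rintro ⟨h1 | ⟨j, hj, rfl⟩, h2⟩
    · exact Or.inl h1
    · rcases h2 with h2 | ⟨j', hj', hj'eq⟩
      · exact absurd h2 (Fin.succAbove_ne i j)
      · have : j' = j := Fin.succAbove_right_injective hj'eq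
        subst this
        exact Or.inr ⟨j', ⟨hj, hj'⟩, rfl⟩
  · rintro (rfl | ⟨j, ⟨hjs, hjt⟩, rfl⟩)
    · exact ⟨Or.inl rfl, Or.inl rfl⟩
    · exact ⟨Or.inr ⟨j, hjs, rfl⟩, Or.inr ⟨j, hjt, rfl⟩⟩

lemma gmap_inj (i : Fin (N+1)) : Function.Injective (gmap i) := by
  intro s t h
  have h' : (gmap i s).erase i = (gmap i t).erase i := by rw [h]
  rw [gmap, gmap, Finset.erase_insert (not_mem_map i s),
    Finset.erase_insert (not_mem_map i t)] at h'
  exact Finset.map_injective _ h'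

lemma gmap_surj (i : Fin (N+1)) {x : Finset (Fin (N+1))} (hx : i ∈ x) :
    ∃ s, gmap i s = x := by
  refine ⟨Finset.univ.filter (fun j => i.succAbove j ∈ x), ?_⟩
  have hmap : (Finset.univ.filter (fun j => i.succAbove j ∈ x)).map i.succAboveEmb
      = x.erase i := by
    ext a
    simp only [Finset.mem_map, Finset.mem_filter, Finset.mem_univ, true_and,
      Fin.succAboveEmb, Function.Embedding.coeFn_mk, Finset.mem_erase]
    constructor
    · rintro ⟨j, hj, rfl⟩
      exact ⟨Fin.succAbove_ne i j, hj⟩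
    · rintro ⟨hne, ha⟩
      obtain ⟨j, rfl⟩ := Fin.exists_succAbove_eq hne
      exact ⟨j, ha, rfl⟩
  rw [gmap, hmap, Finset.insert_erase hx]

/-- lift of a family along `gmap`. -/
def lift (i : Fin (N+1)) (C : Finset (Finset (Fin (N+1)))) : Finset (Finset (Fin N)) :=
  Finset.univ.filter (fun s => gmap i s ∈ C)

def gEmb (i : Fin (N+1)) : Finset (Fin N) ↪ Finset (Fin (N+1)) := ⟨gmap i, gmap_inj i⟩

lemma cardH (i : Fin (N+1)) (C D : Finset (Finset (Fin (N+1))))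
    (hC : ∀ x ∈ C, i ∈ x) (hD : ∀ y ∈ D, i ∈ y) (M k : ℕ) :
    ((C ×ˢ D) ∩ T (N+1) (M+1) (k+1)).card = ((lift i C ×ˢ lift i D) ∩ T N M k).card := by
  rw [← Finset.card_map ((gEmb i).prodMap (gEmb i))]
  congr 1
  ext ⟨x, y⟩
  simp only [Finset.mem_map, Finset.mem_inter, Finset.mem_product, T, Finset.mem_filter,
    Finset.mem_univ, true_and, lift, Function.Embedding.prodMap, gEmb,
    Function.Embedding.coeFn_mk, Prod.map, Prod.mk.injEq, Prod.exists]
  constructor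
  · rintro ⟨⟨hxC, hyD⟩, hx, hy, hxy⟩
    obtain ⟨s, rfl⟩ := gmap_surj i (hC x hxC)
    obtain ⟨t, rfl⟩ := gmap_surj i (hD y hyD)
    rw [gmap_card] at hx hy
    rw [gmap_inter, gmap_card] at hxy
    exact ⟨s, t, ⟨⟨hxC, hyD⟩, by omega, by omega, by omega⟩, rfl, rfl⟩
  · rintro ⟨s, t, ⟨⟨hsC, htD⟩, hs, ht, hst⟩, rfl, rfl⟩
    refine ⟨⟨hsC, htD⟩, ?_, ?_, ?_⟩
    · rw [gmap_card, hs]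
    · rw [gmap_card, ht]
    · rw [gmap_inter, gmap_card, hst]

lemma T_filter_card (i : Fin (N+1)) (M k : ℕ) :
    ((T (N+1) (M+1) (k+1)).filter (fun p => i ∈ p.1 ∧ i ∈ p.2)).card = (T N M k).card := by
  have h := cardH i (Finset.univ.filter (fun x => i ∈ x))
      (Finset.univ.filter (fun x => i ∈ x)) (by simp) (by simp) M k
  have h1 : ((Finset.univ.filter (fun x : Finset (Fin (N+1)) => i ∈ x) ×ˢ
      Finset.univ.filter (fun x => i ∈ x)) ∩ T (N+1) (M+1) (k+1))
      = (T (N+1) (M+1) (k+1)).filter (fun p => i ∈ p.1 ∧ i ∈ p.2) := by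
    ext ⟨x, y⟩
    simp only [Finset.mem_inter, Finset.mem_product, Finset.mem_filter, Finset.mem_univ,
      true_and]
    tauto
  have h2 : lift i (Finset.univ.filter (fun x : Finset (Fin (N+1)) => i ∈ x))
      = Finset.univ := by
    ext s
    simp [lift, gmap]
  rw [h1, h2] at h
  simpa using h

lemma T_card_succ (M k : ℕ) :
    (k+1) * (T (N+1) (M+1) (k+1)).card = (N+1) * (T N M k).card := by
  classical
  set S := (T (N+1) (M+1) (k+1)).sigma (fun p => p.1 ∩ p.2) with hS
  have h1 : S.card = (T (N+1) (M+1) (k+1)).card * (k+1) := by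
    rw [hS, Finset.card_sigma]
    rw [Finset.sum_congr rfl (fun p hp => ?_), Finset.sum_const, smul_eq_mul]
    simp only [T, Finset.mem_filter] at hp
    exact hp.2.2.2
  have h2 : S.card = (N+1) * (T N M k).card := by
    rw [Finset.card_eq_sum_card_fiberwise (f := fun q => q.2) (t := Finset.univ)
      (fun _ _ => Finset.mem_univ _)]
    have hfib : ∀ i : Fin (N+1),
        (S.filter (fun q => q.2 = i)).card = (T N M k).card := by
      intro i
      rw [← T_filter_card i M k]
      apply Finset.card_bij (fun q _ => q.1)
      · rintro ⟨p, j⟩ hq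
        simp only [Finset.mem_filter, hS, Finset.mem_sigma, Finset.mem_inter] at hq
        obtain ⟨⟨hp, h1', h2'⟩, rfl⟩ := hq
        exact Finset.mem_filter.2 ⟨hp, h1', h2'⟩
      · rintro ⟨p, j⟩ hq ⟨p', j'⟩ hq' h
        simp only [Finset.mem_filter] at hq hq'
        cases hq.2; cases hq'.2
        cases h
        rfl
      · intro p hp
        simp only [Finset.mem_filter] at hp
        refine ⟨⟨p, i⟩, ?_, rfl⟩
        simp only [Finset.mem_filter, hS, Finset.mem_sigma, Finset.mem_inter]
        exact ⟨⟨hp.1, hp.2.1, hp.2.2⟩, trivial⟩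
    simp only [hfib, Finset.sum_const, Finset.card_univ, Fintype.card_fin, smul_eq_mul]
  rw [mul_comm, h1.symm, h2]

end Aux


set_option maxHeartbeats 1000000 in
/-- Assuming a Razborov-type lemma with constant `δ`, every rectangle with a witness
element `i` contained in all its intersections is either small on 1-intersection
inputs or has `μ₂(R) ≥ (4/3)·μ₁(R)`. -/
theorem witnessed_rectangle_dichotomy (δ : ℝ) (hδ0 : 0 < δ) (hδ1 : δ ≤ 1)
    (hRaz : ∀ (n' m' : ℕ), 0 < n' →
      (n' : ℝ) / 4 - δ * n' ≤ (m' : ℝ) → (m' : ℝ) ≤ (n' : ℝ) / 4 →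
      ∀ A' B' : Finset (Finset (Fin n')),
        (∀ x ∈ A', x.card = m') → (∀ y ∈ B', y.card = m') →
        mu n' m' 0 (A' ×ˢ B') ≥ (2 : ℝ) ^ (-(δ * n')) →
        mu n' m' 1 (A' ×ˢ B') ≥ (2 / 3) * mu n' m' 0 (A' ×ˢ B')) :
    ∃ β : ℝ, 0 < β ∧ ∃ n₀ : ℕ, ∀ n : ℕ, n₀ ≤ n → 4 ∣ n →
      ∀ A B : Finset (Finset (Fin n)),
        (∀ x ∈ A, x.card = n / 4) → (∀ y ∈ B, y.card = n / 4) →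
        (∃ i : Fin n, ∀ x ∈ A, ∀ y ∈ B, i ∈ x ∩ y) →
        mu n (n / 4) 1 (A ×ˢ B) ≤ (2 : ℝ) ^ (-(β * n)) ∨
          mu n (n / 4) 2 (A ×ˢ B) ≥ (4 / 3) * mu n (n / 4) 1 (A ×ˢ B) := by
  classical
  refine ⟨δ / 2, by positivity, ⌈2/δ⌉₊ + 8, ?_⟩
  rintro n hn hdvd A B hA hB ⟨i, hi⟩
  have hceil : (2 : ℝ) / δ ≤ (⌈2/δ⌉₊ : ℕ) := Nat.le_ceil _
  have hn8 : 8 ≤ n := by omega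
  obtain ⟨N, rfl⟩ : ∃ N, n = N + 1 := ⟨n - 1, by omega⟩
  obtain ⟨M, hM⟩ : ∃ M, (N + 1) / 4 = M + 1 := ⟨(N + 1) / 4 - 1, by omega⟩
  rw [hM] at hA hB ⊢
  -- trivial cases: empty sides
  rcases A.eq_empty_or_nonempty with rfl | hAne
  · left
    simp only [mu, Finset.empty_product, Finset.empty_inter, Finset.card_empty,
      Nat.cast_zero, zero_div]
    positivity
  rcases B.eq_empty_or_nonempty with rfl | hBne
  · left
    simp only [mu, Finset.product_empty, Finset.empty_inter, Finset.card_empty,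
      Nat.cast_zero, zero_div]
    positivity
  obtain ⟨y₀, hy₀⟩ := hBne
  obtain ⟨x₀, hx₀⟩ := hAne
  have hiA : ∀ x ∈ A, i ∈ x := fun x hx => (Finset.mem_inter.1 (hi x hx y₀ hy₀)).1
  have hiB : ∀ y ∈ B, i ∈ y := fun y hy => (Finset.mem_inter.1 (hi x₀ hx₀ y hy)).2
  by_cases hsmall : mu (N+1) (M+1) 1 (A ×ˢ B) ≤ (2 : ℝ) ^ (-(δ / 2 * ((N+1 : ℕ) : ℝ)))
  · exact Or.inl hsmall
  right
  push_neg at hsmall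
  -- abbreviations
  set A' := Aux.lift i A with hA'def
  set B' := Aux.lift i B with hB'def
  have ha := Aux.cardH i A B hiA hiB M 0
  have hb := Aux.cardH i A B hiA hiB M 1
  have d1 := Aux.T_card_succ (N := N) M 0
  have d2 := Aux.T_card_succ (N := N) M 1
  norm_num at ha hb d1 d2
  have hha : (((A ×ˢ B) ∩ T (N+1) (M+1) 1).card : ℝ)
      = (((A' ×ˢ B') ∩ T N M 0).card : ℝ) := by exact_mod_cast ha
  have hhb : (((A ×ˢ B) ∩ T (N+1) (M+1) 2).card : ℝ)
      = (((A' ×ˢ B') ∩ T N M 1).card : ℝ) := by exact_mod_cast hb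
  have hd1 : ((T (N+1) (M+1) 1).card : ℝ) = ((N:ℝ)+1) * ((T N M 0).card : ℝ) := by
    exact_mod_cast d1
  have hd2 : 2 * ((T (N+1) (M+1) 2).card : ℝ) = ((N:ℝ)+1) * ((T N M 1).card : ℝ) := by
    exact_mod_cast d2
  have hp2 : (0:ℝ) < (2 : ℝ) ^ (-(δ / 2 * ((N+1 : ℕ) : ℝ))) := by positivity
  have hmu1pos : 0 < mu (N+1) (M+1) 1 (A ×ˢ B) := lt_trans hp2 hsmall
  have hN1 : (0:ℝ) < (N:ℝ) + 1 := by positivity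
  have htden : ((T (N+1) (M+1) 1).card : ℝ) ≠ 0 := by
    intro h
    rw [mu, h, div_zero] at hmu1pos
    exact lt_irrefl 0 hmu1pos
  have ht0 : ((T N M 0).card : ℝ) ≠ 0 := by
    intro h
    rw [h, mul_zero] at hd1
    exact htden hd1
  have rel0 : mu N M 0 (A' ×ˢ B') = ((N:ℝ)+1) * mu (N+1) (M+1) 1 (A ×ˢ B) := by
    rw [mu, mu, ← hha, hd1]
    field_simp
  -- hRaz hypotheses
  have hNge : ((⌈2/δ⌉₊ : ℕ) : ℝ) ≤ (N : ℝ) := by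
    have : (⌈2/δ⌉₊ : ℕ) ≤ N := by omega
    exact_mod_cast this
  have hNδ : (2:ℝ) ≤ δ * N := by
    rw [div_le_iff₀ hδ0] at hceil
    calc (2:ℝ) ≤ (⌈2/δ⌉₊ : ℕ) * δ := hceil
    _ ≤ (N:ℝ) * δ := by
        apply mul_le_mul_of_nonneg_right hNge hδ0.le
    _ = δ * N := mul_comm _ _
  have hMr : (M : ℝ) = ((N:ℝ)+1)/4 - 1 := by
    have h1 : (((N+1)/4 : ℕ) : ℝ) = ((M:ℕ):ℝ) + 1 := by exact_mod_cast congrArg (Nat.cast (R := ℝ)) hM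
    rw [Nat.cast_div hdvd (by norm_num)] at h1
    push_cast at h1 ⊢
    linarith
  have hub : (M : ℝ) ≤ (N:ℝ) / 4 := by rw [hMr]; linarith
  have hlb : (N:ℝ)/4 - δ * N ≤ (M:ℝ) := by rw [hMr]; linarith
  have hAc : ∀ s ∈ A', s.card = M := by
    intro s hs
    rw [hA'def, Aux.lift, Finset.mem_filter] at hs
    have := hA _ hs.2
    rw [Aux.gmap_card] at this
    omega
  have hBc : ∀ s ∈ B', s.card = M := by
    intro s hs
    rw [hB'def, Aux.lift, Finset.mem_filter] at hs
    have := hB _ hs.2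
    rw [Aux.gmap_card] at this
    omega
  have hmu0big : mu N M 0 (A' ×ˢ B') ≥ (2 : ℝ) ^ (-(δ * (N : ℝ))) := by
    have hN1' : (1:ℝ) ≤ (N:ℝ) := by
      have : 1 ≤ N := by omega
      exact_mod_cast this
    have h1 : mu (N+1) (M+1) 1 (A ×ˢ B) ≤ ((N:ℝ)+1) * mu (N+1) (M+1) 1 (A ×ˢ B) :=
      le_mul_of_one_le_left hmu1pos.le (by linarith)
    have h2 : (2:ℝ) ^ (-(δ * (N:ℝ))) ≤ (2:ℝ) ^ (-(δ / 2 * ((N+1 : ℕ) : ℝ))) := by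
      apply Real.rpow_le_rpow_of_exponent_le (by norm_num)
      push_cast
      linarith [mul_nonneg hδ0.le (sub_nonneg.2 hN1')]
    rw [rel0]
    linarith
  have hRconc := hRaz N M (by omega) hlb hub A' B' hAc hBc hmu0big
  -- conclude
  by_cases ht1' : ((T N M 1).card : ℝ) = 0
  · exfalso
    have hz : mu N M 1 (A' ×ˢ B') = 0 := by rw [mu, ht1', div_zero]
    have hpos0 : 0 < mu N M 0 (A' ×ˢ B') := by
      have : (0:ℝ) < (2 : ℝ) ^ (-(δ * (N : ℝ))) := by positivity
      linarith
    rw [hz] at hRconc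
    linarith
  · have ht2 : ((T (N+1) (M+1) 2).card : ℝ) = ((N:ℝ)+1) * ((T N M 1).card : ℝ) / 2 := by
      linarith
    have rel1 : mu (N+1) (M+1) 2 (A ×ˢ B)
        = (2 / ((N:ℝ)+1)) * mu N M 1 (A' ×ˢ B') := by
      rw [mu, mu, hhb, ht2]
      field_simp
    calc mu (N+1) (M+1) 2 (A ×ˢ B)
        = (2 / ((N:ℝ)+1)) * mu N M 1 (A' ×ˢ B') := rel1
      _ ≥ (2 / ((N:ℝ)+1)) * ((2/3) * mu N M 0 (A' ×ˢ B')) := by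
          apply mul_le_mul_of_nonneg_left hRconc (by positivity)
      _ = (2 / ((N:ℝ)+1)) * ((2/3) * (((N:ℝ)+1) * mu (N+1) (M+1) 1 (A ×ˢ B))) := by
          rw [rel0]
      _ = (4/3) * mu (N+1) (M+1) 1 (A ×ˢ B) := by
          field_simp
          ring
end

section
/- For all positive integers n, k and every integer K with 1 ≤ K ≤ k, the product ∏_{i=0}^{K−1} (k·n − i·n)/(k·n − i) is at least (1 − K/k)^K (as real numbers). -/
/-- `∏_{i=0}^{K−1} (k·n − i·n)/(k·n − i) ≥ (1 − K/k)^K` for `1 ≤ K ≤ k` and `n ≥ 1`. -/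
theorem product_lower_bound (n k K : ℕ) (hn : 1 ≤ n) (hK : 1 ≤ K) (hKk : K ≤ k) :
    ∏ i ∈ Finset.range K,
        (((k : ℝ) * n - (i : ℝ) * n) / ((k : ℝ) * n - (i : ℝ))) ≥
      (1 - (K : ℝ) / k) ^ K := by
  have hk : 1 ≤ k := le_trans hK hKk
  have hk' : (1:ℝ) ≤ k := by exact_mod_cast hk
  have hn' : (1:ℝ) ≤ n := by exact_mod_cast hn
  have hKk' : (K:ℝ) ≤ k := by exact_mod_cast hKk
  have hk0 : (0:ℝ) < k := by linarith
  have hc : (0:ℝ) ≤ 1 - (K:ℝ)/k := by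
    rw [sub_nonneg, div_le_one hk0]; exact hKk'
  rw [ge_iff_le]
  calc (1 - (K:ℝ)/k)^K = ∏ _i ∈ Finset.range K, (1 - (K:ℝ)/k) := by
        rw [Finset.prod_const, Finset.card_range]
    _ ≤ _ := by
        apply Finset.prod_le_prod (fun i _ => hc)
        intro i hi
        have hiK : (i:ℝ) + 1 ≤ K := by
          exact_mod_cast Finset.mem_range.1 hi
        have hi0 : (0:ℝ) ≤ i := Nat.cast_nonneg i
        have hden : (0:ℝ) < k*n - i := by nlinarith
        have heq : (1 - (K:ℝ)/k) = ((k:ℝ)-K)/k := by field_simp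
        rw [heq, div_le_div_iff₀ hk0 hden]
        nlinarith [mul_nonneg (sub_nonneg.2 hKk') hi0,
          mul_nonneg (mul_nonneg hk0.le (by linarith : (0:ℝ) ≤ n)) (by linarith : (0:ℝ) ≤ (K:ℝ) - i)]
end
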